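/- arXiv:1201.3600 — 8 statements merged into one kernel-verified Lean document; each statement's English description precedes it below -/
import Mathlib

section
/- If dim V = 2n, then g has signature (n, n): there exist subspaces V₊ and V₋ of V with V = V₊ ⊕ V₋, dim V₊ = dim V₋ = n, g(V₊, V₋) = 0, g positive definite on V₊, and g negative definite on V₋. -/
open Module Submodule Finset

/-- A Norden metric on a `2n`-dimensional real vector space has
signature `(n, n)`: there are complementary subspaces `V₊`, `V₋` of dimension `n`,
`g`-orthogonal to each other, on which `g` is positive (resp. negative) definite. -/
theorem norden_metric_signature
    (V : Type*) [AddCommGroup V] [Module ℝ V] [FiniteDimensional ℝ V]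
    (J : V →ₗ[ℝ] V) (hJ : ∀ x, J (J x) = -x)
    (g : V →ₗ[ℝ] V →ₗ[ℝ] ℝ)
    (hsymm : ∀ x y, g x y = g y x)
    (hnd : ∀ x, (∀ y, g x y = 0) → x = 0)
    (hN : ∀ x y, g (J x) (J y) = -g x y)
    (n : ℕ) (hdim : Module.finrank ℝ V = 2 * n) :
    ∃ Vp Vm : Submodule ℝ V,
      Vp ⊓ Vm = ⊥ ∧ Vp ⊔ Vm = ⊤ ∧
      Module.finrank ℝ Vp = n ∧ Module.finrank ℝ Vm = n ∧
      (∀ x ∈ Vp, ∀ y ∈ Vm, g x y = 0) ∧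
      (∀ x ∈ Vp, x ≠ 0 → 0 < g x x) ∧
      (∀ x ∈ Vm, x ≠ 0 → g x x < 0) := by
  classical
  obtain ⟨b, hb⟩ : ∃ v : Basis (Fin (finrank ℝ V)) ℝ V, g.IsOrthoᵢ v :=
    LinearMap.BilinForm.exists_orthogonal_basis (LinearMap.isSymm_def.2 (fun x y => hsymm x y))
  -- diagonal entries are nonzero
  have hgnz : ∀ i, g (b i) (b i) ≠ 0 := by
    intro i h0
    have : g (b i) = 0 := by
      apply b.ext
      intro j
      by_cases hij : i = j
      · subst hij; exact h0
      · exact LinearMap.isOrthoᵢ_def.1 hb i j hij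
    exact b.ne_zero i (hnd (b i) (fun y => by rw [this]; rfl))
  set P : Set (Fin (finrank ℝ V)) := {i | 0 < g (b i) (b i)} with hP
  have hPneg : ∀ i, i ∉ P → g (b i) (b i) < 0 := by
    intro i hi
    exact lt_of_le_of_ne (le_of_not_gt hi) (hgnz i)
  set Vp : Submodule ℝ V := span ℝ (b '' P) with hVp
  set Vm : Submodule ℝ V := span ℝ (b '' Pᶜ) with hVm
  -- complementarity
  have hinf : Vp ⊓ Vm = ⊥ :=
    (b.linearIndependent.disjoint_span_image disjoint_compl_right).eq_bot
  have hsup : Vp ⊔ Vm = ⊤ := by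
    rw [hVp, hVm, ← span_union, ← Set.image_union, Set.union_compl_self,
      Set.image_univ, b.span_eq]
  have hcompl : IsCompl Vp Vm := ⟨disjoint_iff.2 hinf, codisjoint_iff.2 hsup⟩
  -- key formula for g in coordinates
  have key : ∀ x y : V, g x y = ∑ i, b.repr x i * (b.repr y i * g (b i) (b i)) := by
    intro x y
    conv_lhs => rw [← b.sum_repr x, ← b.sum_repr y]
    simp only [map_sum, map_smul, LinearMap.coe_sum, Finset.sum_apply,
      LinearMap.smul_apply, smul_eq_mul]
    refine Finset.sum_congr rfl fun j _ => ?_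
    rw [Finset.sum_eq_single j]
    · ring
    · intro i _ hij
      rw [LinearMap.isOrthoᵢ_def.1 hb i j hij, mul_zero]
    · intro h; exact absurd (Finset.mem_univ j) h
  -- membership characterizations
  have memp : ∀ x, x ∈ Vp ↔ ∀ i, i ∉ P → b.repr x i = 0 := by
    intro x
    rw [hVp, b.mem_span_image]
    constructor
    · intro h i hi
      by_contra h0
      exact hi (h (Finsupp.mem_support_iff.2 h0))
    · intro h i hi
      by_contra h0
      exact Finsupp.mem_support_iff.1 hi (h i h0)
  have memm : ∀ x, x ∈ Vm ↔ ∀ i, i ∈ P → b.repr x i = 0 := by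
    intro x
    rw [hVm, b.mem_span_image]
    constructor
    · intro h i hi
      by_contra h0
      exact (h (Finsupp.mem_support_iff.2 h0)) hi
    · intro h i hi
      by_contra h0
      exact Finsupp.mem_support_iff.1 hi (h i (not_not.1 h0))
  -- orthogonality
  have horth : ∀ x ∈ Vp, ∀ y ∈ Vm, g x y = 0 := by
    intro x hx y hy
    rw [key]
    apply Finset.sum_eq_zero
    intro i _
    by_cases hi : i ∈ P
    · rw [(memm y).1 hy i hi, zero_mul, mul_zero]
    · rw [(memp x).1 hx i hi, zero_mul]
  -- definiteness
  have hpos : ∀ x ∈ Vp, x ≠ 0 → 0 < g x x := by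
    intro x hx hx0
    rw [key]
    apply Finset.sum_pos'
    · intro i _
      by_cases hi : i ∈ P
      · have hgi : 0 < g (b i) (b i) := hi
        nlinarith [mul_self_nonneg (b.repr x i)]
      · rw [(memp x).1 hx i hi, zero_mul]
    · obtain ⟨i, hi⟩ : ∃ i, b.repr x i ≠ 0 := by
        by_contra h
        push_neg at h
        exact hx0 (b.repr.map_eq_zero_iff.1 (Finsupp.ext h))
      have hiP : i ∈ P := by
        by_contra hiP
        exact hi ((memp x).1 hx i hiP)
      have hgi : 0 < g (b i) (b i) := hiP
      exact ⟨i, Finset.mem_univ i, by nlinarith [mul_self_pos.2 hi]⟩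
  have hneg : ∀ x ∈ Vm, x ≠ 0 → g x x < 0 := by
    intro x hx hx0
    rw [key, ← neg_pos, ← Finset.sum_neg_distrib]
    apply Finset.sum_pos'
    · intro i _
      by_cases hi : i ∈ P
      · rw [(memm x).1 hx i hi, zero_mul, neg_zero]
      · nlinarith [hPneg i hi, mul_self_nonneg (b.repr x i)]
    · obtain ⟨i, hi⟩ : ∃ i, b.repr x i ≠ 0 := by
        by_contra h
        push_neg at h
        exact hx0 (b.repr.map_eq_zero_iff.1 (Finsupp.ext h))
      have hiP : i ∉ P := fun hiP => hi ((memm x).1 hx i hiP)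
      exact ⟨i, Finset.mem_univ i, by nlinarith [hPneg i hiP, mul_self_pos.2 hi]⟩
  -- J is an equivalence
  let e : V ≃ₗ[ℝ] V := LinearEquiv.ofLinear J (-J)
    (by ext x; simp [LinearMap.comp_apply, map_neg, hJ])
    (by ext x; simp [LinearMap.comp_apply, map_neg, hJ])
  have he : (e : V →ₗ[ℝ] V) = J := rfl
  -- dimension bounds
  have bound_m : ∀ W : Submodule ℝ V, (∀ x ∈ W, x ≠ 0 → g x x < 0) →
      finrank ℝ W ≤ finrank ℝ Vm := by
    intro W hW
    apply LinearMap.finrank_le_finrank_of_injective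
      (f := (Submodule.projectionOnto Vm Vp hcompl.symm).comp W.subtype)
    intro w₁ w₂ h
    have h0 : Submodule.projectionOnto Vm Vp hcompl.symm ((w₁ : V) - w₂) = 0 := by
      rw [map_sub, sub_eq_zero]; exact h
    rw [Submodule.projectionOnto_apply_eq_zero_iff] at h0
    have hmem : (w₁ : V) - w₂ ∈ W := sub_mem w₁.2 w₂.2
    by_cases hz : (w₁ : V) - w₂ = 0
    · exact Subtype.ext (sub_eq_zero.1 hz)
    · exact absurd (hpos _ h0 hz) (not_lt.2 (le_of_lt (hW _ hmem hz)))
  have bound_p : ∀ W : Submodule ℝ V, (∀ x ∈ W, x ≠ 0 → 0 < g x x) →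
      finrank ℝ W ≤ finrank ℝ Vp := by
    intro W hW
    apply LinearMap.finrank_le_finrank_of_injective
      (f := (Submodule.projectionOnto Vp Vm hcompl).comp W.subtype)
    intro w₁ w₂ h
    have h0 : Submodule.projectionOnto Vp Vm hcompl ((w₁ : V) - w₂) = 0 := by
      rw [map_sub, sub_eq_zero]; exact h
    rw [Submodule.projectionOnto_apply_eq_zero_iff] at h0
    have hmem : (w₁ : V) - w₂ ∈ W := sub_mem w₁.2 w₂.2
    by_cases hz : (w₁ : V) - w₂ = 0
    · exact Subtype.ext (sub_eq_zero.1 hz)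
    · exact absurd (hneg _ h0 hz) (not_lt.2 (le_of_lt (hW _ hmem hz)))
  -- J maps Vp into a negative definite subspace and vice versa
  have hd1 : finrank ℝ Vp ≤ finrank ℝ Vm := by
    have : finrank ℝ (Vp.map J) = finrank ℝ Vp := by
      rw [← he]; exact LinearEquiv.finrank_map_eq e Vp
    rw [← this]
    apply bound_m
    rintro x hx hx0
    obtain ⟨y, hy, rfl⟩ := Submodule.mem_map.1 hx
    have hy0 : y ≠ 0 := fun h => hx0 (by rw [h, map_zero])
    have := hpos y hy hy0
    rw [hN]; linarith
  have hd2 : finrank ℝ Vm ≤ finrank ℝ Vp := by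
    have : finrank ℝ (Vm.map J) = finrank ℝ Vm := by
      rw [← he]; exact LinearEquiv.finrank_map_eq e Vm
    rw [← this]
    apply bound_p
    rintro x hx hx0
    obtain ⟨y, hy, rfl⟩ := Submodule.mem_map.1 hx
    have hy0 : y ≠ 0 := fun h => hx0 (by rw [h, map_zero])
    have := hneg y hy hy0
    rw [hN]; linarith
  have hsum : finrank ℝ Vp + finrank ℝ Vm = 2 * n := by
    rw [← hdim, ← Submodule.finrank_sup_add_finrank_inf_eq, hsup, hinf, finrank_bot,
      add_zero, finrank_top]
  exact ⟨Vp, Vm, hinf, hsup, by omega, by omega, horth, hpos, hneg⟩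
end

section
/- Let W be a subspace of V on which the restriction of g is nondegenerate, so that V = W ⊕ W^{⊥g}, and let P : V → W be the projection onto W along W^{⊥g}. Then the operator T : W → W, T(x) = P(J x), is self-adjoint with respect to both metrics: g(T x, y) = g(x, T y) and g̃(T x, y) = g̃(x, T y) for all x, y ∈ W. -/
/-- For a bilinear form `h` on `V` and a subspace `W`, the `h`-orthogonal space
`W^{⊥h} = {v ∈ V : h(v, w) = 0 for all w ∈ W}`. -/
def perpBilin {V : Type*} [AddCommGroup V] [Module ℝ V]
    (h : V →ₗ[ℝ] V →ₗ[ℝ] ℝ) (W : Submodule ℝ V) : Submodule ℝ V where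
  carrier := {v | ∀ w ∈ W, h v w = 0}
  add_mem' := by
    intro a b ha hb w hw
    simp [ha w hw, hb w hw]
  zero_mem' := by
    intro w hw
    simp
  smul_mem' := by
    intro c a ha w hw
    simp [ha w hw]

/-- Let `W` be a subspace on which `g` is nondegenerate, so that
`V = W ⊕ W^{⊥g}`, and let `P : V → W` be the projection onto `W` along `W^{⊥g}`.
Then `T : W → W`, `T x = P (J x)`, is self-adjoint with respect to both `g` and
the associated metric `g̃ = g ∘ J`:
`g(Tx, y) = g(x, Ty)` and `g̃(Tx, y) = g̃(x, Ty)` for all `x, y ∈ W`. -/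
theorem tangential_part_self_adjoint
    (V : Type*) [AddCommGroup V] [Module ℝ V] [FiniteDimensional ℝ V]
    (J : V →ₗ[ℝ] V) (hJ : ∀ x, J (J x) = -x)
    (g : V →ₗ[ℝ] V →ₗ[ℝ] ℝ)
    (hsymm : ∀ x y, g x y = g y x)
    (hnd : ∀ x, (∀ y, g x y = 0) → x = 0)
    (hN : ∀ x y, g (J x) (J y) = -g x y)
    (W : Submodule ℝ V)
    (hWnd : W ⊓ perpBilin g W = ⊥)
    (hWcompl : W ⊔ perpBilin g W = ⊤)
    (P : V →ₗ[ℝ] V)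
    (hPW : ∀ v, P v ∈ W)
    (hPid : ∀ w ∈ W, P w = w)
    (hPperp : ∀ v, v - P v ∈ perpBilin g W) :
    ∀ x ∈ W, ∀ y ∈ W,
      g (P (J x)) y = g x (P (J y)) ∧
      g (J (P (J x))) y = g (J x) (P (J y)) := by
  -- g pairs anything with W-elements through P
  have hdrop : ∀ a : V, ∀ w ∈ W, g a w = g (P a) w := by
    intro a w hw
    have h0 := hPperp a w hw
    have : g a w - g (P a) w = 0 := by
      simpa [map_sub, LinearMap.sub_apply] using h0
    linarith
  -- g(Ja, b) = g(a, Jb)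
  have hflip : ∀ a b : V, g (J a) b = g a (J b) := by
    intro a b
    have h1 : g (J a) (J (J b)) = -g a (J b) := hN a (J b)
    rw [hJ b] at h1
    simpa using h1
  intro x hx y hy
  constructor
  · calc g (P (J x)) y = g (J x) y := (hdrop (J x) y hy).symm
      _ = g x (J y) := hflip x y
      _ = g (J y) x := hsymm x (J y)
      _ = g (P (J y)) x := hdrop (J y) x hx
      _ = g x (P (J y)) := hsymm _ _
  · calc g (J (P (J x))) y = g (P (J x)) (J y) := hflip _ _
      _ = g (J y) (P (J x)) := hsymm _ _
      _ = g (P (J y)) (P (J x)) := hdrop (J y) _ (hPW _)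
      _ = g (P (J x)) (P (J y)) := hsymm _ _
      _ = g (J x) (P (J y)) := (hdrop (J x) _ (hPW _)).symm
end

section
/- (Theorem 3.2, forward direction) Let (W, D, D⊥) be a CR datum. Then the radical of W with respect to g̃ equals the totally real distribution: W ∩ W^{⊥g̃} = D⊥. In particular, if dim D⊥ = r ≥ 1 then W is an r-lightlike subspace with respect to g̃. -/
/-- **Theorem 3.2, forward direction.** Let `(W, D, Dp)` be a CR datum
in a Norden vector space `(V, J, g)`: `W = D ⊕ Dp`, `g(D, Dp) = 0`, `g│W`
nondegenerate, `J(D) = D` and `J(Dp) ⊆ W^{⊥g}`.  Then the radical of `W` with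
respect to the associated metric `g̃ = g ∘ J` equals `Dp`: `W ∩ W^{⊥g̃} = Dp`.
In particular, if `dim Dp = r ≥ 1`, then `W` is an `r`-lightlike subspace with
respect to `g̃`. -/
theorem cr_datum_radical_eq_totally_real
    (V : Type*) [AddCommGroup V] [Module ℝ V] [FiniteDimensional ℝ V]
    (J : V →ₗ[ℝ] V) (hJ : ∀ x, J (J x) = -x)
    (g : V →ₗ[ℝ] V →ₗ[ℝ] ℝ)
    (hsymm : ∀ x y, g x y = g y x)
    (hnd : ∀ x, (∀ y, g x y = 0) → x = 0)
    (hN : ∀ x y, g (J x) (J y) = -g x y)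
    (W D Dp : Submodule ℝ V)
    (hDW : D ≤ W) (hDpW : Dp ≤ W)
    (hsum : D ⊔ Dp = W) (hint : D ⊓ Dp = ⊥)
    (horth : ∀ x ∈ D, ∀ y ∈ Dp, g x y = 0)
    (hWnd : W ⊓ perpBilin g W = ⊥)
    (hJD : Submodule.map J D = D)
    (hJDp : Submodule.map J Dp ≤ perpBilin g W) :
    W ⊓ perpBilin (g ∘ₗ J) W = Dp ∧
    (∀ r : ℕ, 1 ≤ r → Module.finrank ℝ Dp = r →
      Module.finrank ℝ ↥(W ⊓ perpBilin (g ∘ₗ J) W) = r) := by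

  have key : W ⊓ perpBilin (g ∘ₗ J) W = Dp := by
    apply le_antisymm
    · rintro v ⟨hvW, hvperp⟩
      obtain ⟨x, hx, y, hy, rfl⟩ : ∃ x ∈ D, ∃ y ∈ Dp, x + y = v := by
        have hv : v ∈ D ⊔ Dp := hsum ▸ hvW
        rcases Submodule.mem_sup.mp hv with ⟨x, hx, y, hy, h⟩
        exact ⟨x, hx, y, hy, h⟩
      have hJy : J y ∈ perpBilin g W := hJDp ⟨y, hy, rfl⟩
      have hJx : J x ∈ D := hJD ▸ ⟨x, hx, rfl⟩
      have hJx0 : J x = 0 := by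
        have hmem : J x ∈ W ⊓ perpBilin g W := by
          refine ⟨hDW hJx, fun w hw => ?_⟩
          have h1 : (g ∘ₗ J) (x + y) w = 0 := hvperp w hw
          have h2 : g (J y) w = 0 := hJy w hw
          have h3 : g (J x + J y) w = 0 := by
            simpa [LinearMap.comp_apply, map_add] using h1
          simpa [map_add, LinearMap.add_apply, h2] using h3
        simpa [hWnd] using hmem
      have hx0 : x = 0 := by
        have := hJ x
        rw [hJx0, map_zero] at this
        simpa using this.symm
      simpa [hx0] using hy
    · intro d hd
      refine ⟨hDpW hd, fun w hw => ?_⟩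
      exact hJDp ⟨d, hd, rfl⟩ w hw
  refine ⟨key, fun r _ hr => ?_⟩
  rw [key]; exact hr
end

section
/- (Theorem 3.2, decomposition of the g̃-normal space) Let (W, D, D⊥) be a CR datum. Then W^{⊥g̃} = D⊥ ⊕ (W^{⊥g} ∩ (J(D⊥))^{⊥g}), this sum is direct, and the two summands are g̃-orthogonal. -/
lemma mem_perpBilin {V : Type*} [AddCommGroup V] [Module ℝ V]
    {h : V →ₗ[ℝ] V →ₗ[ℝ] ℝ} {W : Submodule ℝ V} {v : V} :
    v ∈ perpBilin h W ↔ ∀ w ∈ W, h v w = 0 := Iff.rfl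

/-- **Theorem 3.2, decomposition of the `g̃`-normal space.**
For a CR datum `(W, D, Dp)` one has
`W^{⊥g̃} = Dp ⊕ (W^{⊥g} ∩ (J(Dp))^{⊥g})`, a direct sum whose two summands are
`g̃`-orthogonal, where `g̃ = g ∘ J` is the associated metric. -/
theorem cr_datum_normal_space_decomposition
    (V : Type*) [AddCommGroup V] [Module ℝ V] [FiniteDimensional ℝ V]
    (J : V →ₗ[ℝ] V) (hJ : ∀ x, J (J x) = -x)
    (g : V →ₗ[ℝ] V →ₗ[ℝ] ℝ)
    (hsymm : ∀ x y, g x y = g y x)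
    (hnd : ∀ x, (∀ y, g x y = 0) → x = 0)
    (hN : ∀ x y, g (J x) (J y) = -g x y)
    (W D Dp : Submodule ℝ V)
    (hDW : D ≤ W) (hDpW : Dp ≤ W)
    (hsum : D ⊔ Dp = W) (hint : D ⊓ Dp = ⊥)
    (horth : ∀ x ∈ D, ∀ y ∈ Dp, g x y = 0)
    (hWnd : W ⊓ perpBilin g W = ⊥)
    (hJD : Submodule.map J D = D)
    (hJDp : Submodule.map J Dp ≤ perpBilin g W) :
    perpBilin (g ∘ₗ J) W
        = Dp ⊔ (perpBilin g W ⊓ perpBilin g (Submodule.map J Dp)) ∧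
    Dp ⊓ (perpBilin g W ⊓ perpBilin g (Submodule.map J Dp)) = ⊥ ∧
    (∀ x ∈ Dp, ∀ y ∈ perpBilin g W ⊓ perpBilin g (Submodule.map J Dp),
      g (J x) y = 0 ∧ g (J y) x = 0) := by
  -- g(Jx, y) = g(x, Jy)
  have hgJ : ∀ x y, g (J x) y = g x (J y) := by
    intro x y
    have h1 := hN (J x) y
    rw [hJ x] at h1
    simp only [map_neg, LinearMap.neg_apply] at h1
    linarith
  -- every element of D is J of an element of D
  have hDsurj : ∀ x ∈ D, ∃ x' ∈ D, J x' = x := by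
    intro x hx
    rw [← hJD] at hx
    obtain ⟨x', hx', h⟩ := hx
    exact ⟨x', hx', h⟩
  have hJDmem : ∀ x ∈ D, J x ∈ D := by
    intro x hx
    rw [← hJD]; exact ⟨x, hx, rfl⟩
  -- the bilinear form framework
  have hrefl : LinearMap.BilinForm.IsRefl g := by
    intro x y h; rw [hsymm]; exact h
  have horthog : LinearMap.BilinForm.orthogonal g W = perpBilin g W := by
    ext v
    simp only [LinearMap.BilinForm.mem_orthogonal_iff, mem_perpBilin,
      LinearMap.BilinForm.IsOrtho, LinearMap.isOrtho_def]
    constructor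
    · intro h w hw; rw [hsymm]; exact h w hw
    · intro h w hw; rw [hsymm]; exact h w hw
  have hrestrict : (LinearMap.BilinForm.restrict g W).Nondegenerate := by
    refine ⟨?_, fun x hx => ?_⟩
    intro x hx
    have hxmem : (x : V) ∈ W ⊓ perpBilin g W := by
      refine ⟨x.2, fun w hw => ?_⟩
      exact hx ⟨w, hw⟩
    rw [hWnd] at hxmem
    exact Subtype.ext hxmem
    have hxmem : (x : V) ∈ W ⊓ perpBilin g W :=
      ⟨x.2, fun w hw => by rw [hsymm]; exact hx ⟨w, hw⟩⟩
    rw [hWnd] at hxmem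
    exact Subtype.ext hxmem
  have hcompl : IsCompl W (perpBilin g W) := by
    rw [← horthog]
    exact LinearMap.BilinForm.isCompl_orthogonal_of_restrict_nondegenerate hrefl hrestrict
  have hdecomp : ∀ v : V, ∃ w ∈ W, ∃ u ∈ perpBilin g W, v = w + u := by
    intro v
    have : v ∈ W ⊔ perpBilin g W := by rw [hcompl.sup_eq_top]; trivial
    obtain ⟨w, hw, u, hu, h⟩ := Submodule.mem_sup.mp this
    exact ⟨w, hw, u, hu, h.symm⟩
  -- g(Ju, x) = 0 for u ∈ perp g W, x ∈ D
  have hJu : ∀ u ∈ perpBilin g W, ∀ x ∈ D, g (J u) x = 0 := by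
    intro u hu x hx
    obtain ⟨x', hx', rfl⟩ := hDsurj x hx
    rw [hN]
    simp [hu x' (hDW hx')]
  refine ⟨?_, ?_, ?_⟩
  · ext v
    simp only [mem_perpBilin, LinearMap.coe_comp, Function.comp_apply]
    constructor
    · intro hv
      obtain ⟨w, hw, u, hu, rfl⟩ := hdecomp v
      rw [← hsum] at hw
      obtain ⟨d, hd, p, hp, rfl⟩ := Submodule.mem_sup.mp hw
      -- show J d = 0
      have hJd : J d ∈ W ⊓ perpBilin g W := by
        refine ⟨hDW (hJDmem d hd), fun w' hw' => ?_⟩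
        rw [← hsum] at hw'
        obtain ⟨d', hd', p', hp', rfl⟩ := Submodule.mem_sup.mp hw'
        have h1 : g (J d) p' = 0 := horth _ (hJDmem d hd) _ hp'
        have h2 : g (J (d + p + u)) d' = 0 := hv _ (hDW hd')
        have h3 : g (J p) d' = 0 := hJDp ⟨p, hp, rfl⟩ _ (hDW hd')
        have h4 : g (J u) d' = 0 := hJu u hu d' hd'
        simp only [map_add] at h2
        have : g (J d) d' = 0 := by
          have := h2
          simp only [map_add, LinearMap.add_apply] at this
          linarith
        simp only [map_add, LinearMap.add_apply, this, h1]
        ring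
      rw [hWnd] at hJd
      have hd0 : d = 0 := by
        have := hJ d
        rw [hJd] at this
        simp only [map_zero] at this
        exact (neg_eq_zero.mp this.symm)
      subst hd0
      -- v = p + u with p ∈ Dp, u ∈ perp g W ∩ perp g (J Dp)
      have hu2 : u ∈ perpBilin g (Submodule.map J Dp) := by
        intro y hy
        obtain ⟨q, hq, rfl⟩ := hy
        have h2 : g (J (0 + p + u)) q = 0 := hv _ (hDpW hq)
        have h3 : g (J p) q = 0 := hJDp ⟨p, hp, rfl⟩ _ (hDpW hq)
        have h4 : g (J u) q = 0 := by
          simp only [zero_add, map_add, LinearMap.add_apply] at h2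
          linarith
        rw [← hgJ]; exact h4
      apply Submodule.mem_sup.mpr
      exact ⟨p, hp, u, ⟨hu, hu2⟩, by abel⟩
    · intro hv w hw
      obtain ⟨p, hp, u, hu, rfl⟩ := Submodule.mem_sup.mp hv
      obtain ⟨hu1, hu2⟩ := hu
      rw [← hsum] at hw
      obtain ⟨d, hd, p', hp', rfl⟩ := Submodule.mem_sup.mp hw
      have hJp : J p ∈ perpBilin g W := hJDp ⟨p, hp, rfl⟩
      have h1 : g (J p) d = 0 := hJp d (hDW hd)
      have h2 : g (J p) p' = 0 := hJp p' (hDpW hp')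
      have h3 : g (J u) d = 0 := hJu u hu1 d hd
      have h4 : g (J u) p' = 0 := by
        rw [hgJ]
        exact hu2 (J p') ⟨p', hp', rfl⟩
      simp only [map_add, LinearMap.add_apply, h1, h2, h3, h4]
      ring
  · rw [eq_bot_iff, ← hWnd]
    intro x hx
    exact ⟨hDpW hx.1, hx.2.1⟩
  · intro x hx y hy
    obtain ⟨hy1, hy2⟩ := hy
    have h1 : g y (J x) = 0 := hy2 (J x) ⟨x, hx, rfl⟩
    constructor
    · rw [hsymm (J x) y]; exact h1
    · rw [hgJ]; exact h1
end

section
/- Let (W, D, D⊥) be a CR datum. Then the subspace W^{⊥g} ∩ (J(D⊥))^{⊥g} (the g-orthogonal complement of J(D⊥) inside W^{⊥g}) is J-invariant (holomorphic). -/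
/-- For a CR datum `(W, D, Dp)` in a Norden vector space
`(V, J, g)`, the `g`-orthogonal complement of `J(Dp)` inside `W^{⊥g}`, namely
`W^{⊥g} ∩ (J(Dp))^{⊥g}`, is `J`-invariant (holomorphic). -/
theorem cr_datum_screen_transversal_holomorphic
    (V : Type*) [AddCommGroup V] [Module ℝ V] [FiniteDimensional ℝ V]
    (J : V →ₗ[ℝ] V) (hJ : ∀ x, J (J x) = -x)
    (g : V →ₗ[ℝ] V →ₗ[ℝ] ℝ)
    (hsymm : ∀ x y, g x y = g y x)
    (hnd : ∀ x, (∀ y, g x y = 0) → x = 0)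
    (hN : ∀ x y, g (J x) (J y) = -g x y)
    (W D Dp : Submodule ℝ V)
    (hDW : D ≤ W) (hDpW : Dp ≤ W)
    (hsum : D ⊔ Dp = W) (hint : D ⊓ Dp = ⊥)
    (horth : ∀ x ∈ D, ∀ y ∈ Dp, g x y = 0)
    (hWnd : W ⊓ perpBilin g W = ⊥)
    (hJD : Submodule.map J D = D)
    (hJDp : Submodule.map J Dp ≤ perpBilin g W) :
    Submodule.map J (perpBilin g W ⊓ perpBilin g (Submodule.map J Dp))
      = perpBilin g W ⊓ perpBilin g (Submodule.map J Dp) := by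
  have memPerp : ∀ (U : Submodule ℝ V) (v : V), v ∈ perpBilin g U ↔ ∀ w ∈ U, g v w = 0 :=
    fun U v => Iff.rfl
  have key : ∀ v ∈ perpBilin g W ⊓ perpBilin g (Submodule.map J Dp),
      J v ∈ perpBilin g W ⊓ perpBilin g (Submodule.map J Dp) := by
    rintro v ⟨hv1, hv2⟩
    constructor
    · intro w hw
      rw [← hsum] at hw
      obtain ⟨d, hd, d', hd', rfl⟩ := Submodule.mem_sup.mp hw
      rw [← hJD] at hd
      obtain ⟨d0, hd0, rfl⟩ := hd
      have h1 : g (J v) (J d0) = 0 := by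
        rw [hN]; rw [hv1 d0 (hDW hd0)]; ring
      have h2 : g (J v) d' = 0 := by
        have := hN (J v) d'
        rw [hJ v] at this
        have hv2' : g v (J d') = 0 := hv2 (J d') ⟨d', hd', rfl⟩
        simp only [map_neg, LinearMap.neg_apply] at this
        linarith
      simp [h1, h2]
    · rintro _ ⟨d', hd', rfl⟩
      rw [hN]; rw [hv1 d' (hDpW hd')]; ring
  apply le_antisymm
  · rintro _ ⟨v, hv, rfl⟩
    exact key v hv
  · intro s hs
    exact ⟨-J s, neg_mem (key s hs), by simp [hJ s]⟩
end

section
/- (Proposition 3.1, pointwise form) Let (W, S, Rad, L, S') be a Radical transversal datum with respect to g̃. Then the screen transversal space S' is J-invariant: J(S') = S'. -/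
/-- **Proposition 3.1, pointwise form.** Let `(W, S, Rad, L, S')` be a
Radical transversal datum with respect to the associated metric `g̃ = g ∘ J`:
`V = S ⊕ Rad ⊕ L ⊕ S'`, `W = S ⊕ Rad`, `Rad = W ∩ W^{⊥g̃} ≠ 0`, `g̃│S` and
`g̃│S'` nondegenerate, `S' ⊆ W^{⊥g̃}`, `g̃` vanishes on `L×L`, `L×S`, `L×S'`, the
pairing between `L` and `Rad` via `g̃` is nondegenerate, `J(Rad) = L`, `J(S) = S`.
Then the screen transversal space `S'` is `J`-invariant: `J(S') = S'`. -/
theorem radical_transversal_screen_transversal_holomorphic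
    (V : Type*) [AddCommGroup V] [Module ℝ V] [FiniteDimensional ℝ V]
    (J : V →ₗ[ℝ] V) (hJ : ∀ x, J (J x) = -x)
    (g : V →ₗ[ℝ] V →ₗ[ℝ] ℝ)
    (hsymm : ∀ x y, g x y = g y x)
    (hnd : ∀ x, (∀ y, g x y = 0) → x = 0)
    (hN : ∀ x y, g (J x) (J y) = -g x y)
    (W S Rad L S' : Submodule ℝ V)
    (hind1 : S ⊓ Rad = ⊥)
    (hind2 : (S ⊔ Rad) ⊓ L = ⊥)
    (hind3 : (S ⊔ Rad ⊔ L) ⊓ S' = ⊥)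
    (hspan : S ⊔ Rad ⊔ L ⊔ S' = ⊤)
    (hW : W = S ⊔ Rad)
    (hRad : Rad = W ⊓ perpBilin (g ∘ₗ J) W) (hRadne : Rad ≠ ⊥)
    (hSnd : S ⊓ perpBilin (g ∘ₗ J) S = ⊥)
    (hS'perp : S' ≤ perpBilin (g ∘ₗ J) W)
    (hS'nd : S' ⊓ perpBilin (g ∘ₗ J) S' = ⊥)
    (hLL : ∀ x ∈ L, ∀ y ∈ L, g (J x) y = 0)
    (hLS : ∀ x ∈ L, ∀ y ∈ S, g (J x) y = 0)
    (hLS' : ∀ x ∈ L, ∀ y ∈ S', g (J x) y = 0)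
    (hpair1 : ∀ n ∈ L, (∀ ξ ∈ Rad, g (J n) ξ = 0) → n = 0)
    (hpair2 : ∀ ξ ∈ Rad, (∀ n ∈ L, g (J n) ξ = 0) → ξ = 0)
    (hJRad : Submodule.map J Rad = L)
    (hJS : Submodule.map J S = S) :
    Submodule.map J S' = S' := by
  -- g̃(u,v) = g(Ju,v) is symmetric
  have gts : ∀ u v : V, g (J u) v = g (J v) u := by
    intro u v
    have h1 := hN v (J u)
    rw [hJ u] at h1
    simp only [map_neg, neg_inj] at h1
    rw [h1, hsymm]
  have memperp : ∀ (U : Submodule ℝ V) (v : V),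
      v ∈ perpBilin (g ∘ₗ J) U ↔ ∀ w ∈ U, g (J v) w = 0 := fun U v => Iff.rfl
  have hRadW : Rad ≤ W := by rw [hW]; exact le_sup_right
  have hSW : S ≤ W := by rw [hW]; exact le_sup_left
  -- the key: J maps S' into S'
  have key : ∀ x ∈ S', J x ∈ S' := by
    intro x hx
    have hxperp : ∀ w ∈ W, g (J x) w = 0 := (memperp W x).mp (hS'perp hx)
    have hJxtop : J x ∈ S ⊔ Rad ⊔ L ⊔ S' := by rw [hspan]; trivial
    obtain ⟨a, ha, s', hs', hsum⟩ := Submodule.mem_sup.mp hJxtop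
    obtain ⟨b, hb, n, hn, hsum2⟩ := Submodule.mem_sup.mp ha
    obtain ⟨s, hs, xi, hxi, hsum3⟩ := Submodule.mem_sup.mp hb
    -- J x = s + xi + n + s'
    have hdec : J x = s + xi + n + s' := by rw [← hsum, ← hsum2, ← hsum3]
    -- Step 1: xi = 0
    have hxi0 : xi = 0 := by
      apply hpair2 xi hxi
      intro n' hn'
      obtain ⟨eta, heta, heq⟩ := hJRad ▸ hn'
      have hgn'x : g n' x = 0 := by
        rw [← heq, gts]
        exact hxperp eta (hRadW heta)
      have h2 : g (J n') (J x) = 0 := by rw [hN]; simp [hgn'x]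
      rw [hdec] at h2
      simp only [map_add] at h2
      rw [hLS n' hn' s hs, hLL n' hn' n hn, hLS' n' hn' s' hs'] at h2
      linarith
    -- Step 2: n = 0
    have hn0 : n = 0 := by
      apply hpair1 n hn
      intro xi' hxi'
      have hxi'perp : ∀ w ∈ W, g (J xi') w = 0 :=
        (memperp W xi').mp (hRad ▸ hxi').2
      have hJxi'L : J xi' ∈ L := hJRad ▸ ⟨xi', hxi', rfl⟩
      have hgxi'x : g xi' x = 0 := by
        have := hLS' (J xi') hJxi'L x hx
        rw [hJ] at this
        simpa using this
      have h2 : g (J xi') (J x) = 0 := by rw [hN]; simp [hgxi'x]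
      rw [hdec] at h2
      simp only [map_add] at h2
      rw [hxi'perp s (hSW hs), hxi'perp xi (hRadW hxi)] at h2
      have hgs' : g (J xi') s' = 0 := by
        rw [gts]; exact hxperp xi' (hRadW hxi') ▸ (hS'perp hs' xi' (hRadW hxi'))
      rw [hgs'] at h2
      rw [gts]
      linarith
    -- Step 3: s = 0
    have hs0 : s = 0 := by
      have : s ∈ S ⊓ perpBilin (g ∘ₗ J) S := by
        refine ⟨hs, (memperp S s).mpr ?_⟩
        intro y hy
        rw [gts]
        obtain ⟨z, hz, hzeq⟩ := hJS ▸ hy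
        have hgyx : g y x = 0 := by
          rw [← hzeq, gts]
          exact hxperp z (hSW hz)
        have h2 : g (J y) (J x) = 0 := by rw [hN]; simp [hgyx]
        rw [hdec, hxi0, hn0] at h2
        simp only [map_add, add_zero] at h2
        have hgs' : g (J y) s' = 0 := by
          rw [gts]; exact hS'perp hs' y (hSW hy)
        rw [hgs'] at h2
        linarith
      rw [hSnd] at this
      exact this
    rw [hdec, hxi0, hn0, hs0]
    simpa using hs'
  apply le_antisymm
  · rintro _ ⟨x, hx, rfl⟩
    exact key x hx
  · intro x hx
    refine ⟨-(J x), neg_mem (key x hx), ?_⟩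
    rw [map_neg, hJ, neg_neg]
end

section
/- (Theorem 3.2, converse direction) Let (W, S, Rad, L, S') be a Radical transversal datum with respect to g̃. Then the subspaces S, Rad, L, S' are mutually g-orthogonal; consequently W^{⊥g} = L ⊕ S', the restriction of g to W is nondegenerate, and (W, S, Rad) is a CR datum for g: W = S ⊕ Rad with g(S, Rad) = 0, J(S) = S and J(Rad) ⊆ W^{⊥g}. -/
/-- **Theorem 3.2, converse direction.** Let `(W, S, Rad, L, S')` be
a Radical transversal datum with respect to the associated metric `g̃ = g ∘ J`.
Then `S`, `Rad`, `L`, `S'` are mutually `g`-orthogonal; consequently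
`W^{⊥g} = L ⊕ S'`, the restriction of `g` to `W` is nondegenerate, and
`(W, S, Rad)` is a CR datum for `g`: `W = S ⊕ Rad` with `g(S, Rad) = 0`,
`J(S) = S` and `J(Rad) ⊆ W^{⊥g}`. -/
theorem radical_transversal_gives_cr_datum
    (V : Type*) [AddCommGroup V] [Module ℝ V] [FiniteDimensional ℝ V]
    (J : V →ₗ[ℝ] V) (hJ : ∀ x, J (J x) = -x)
    (g : V →ₗ[ℝ] V →ₗ[ℝ] ℝ)
    (hsymm : ∀ x y, g x y = g y x)
    (hnd : ∀ x, (∀ y, g x y = 0) → x = 0)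
    (hN : ∀ x y, g (J x) (J y) = -g x y)
    (W S Rad L S' : Submodule ℝ V)
    (hind1 : S ⊓ Rad = ⊥)
    (hind2 : (S ⊔ Rad) ⊓ L = ⊥)
    (hind3 : (S ⊔ Rad ⊔ L) ⊓ S' = ⊥)
    (hspan : S ⊔ Rad ⊔ L ⊔ S' = ⊤)
    (hW : W = S ⊔ Rad)
    (hRad : Rad = W ⊓ perpBilin (g ∘ₗ J) W) (hRadne : Rad ≠ ⊥)
    (hSnd : S ⊓ perpBilin (g ∘ₗ J) S = ⊥)
    (hS'perp : S' ≤ perpBilin (g ∘ₗ J) W)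
    (hS'nd : S' ⊓ perpBilin (g ∘ₗ J) S' = ⊥)
    (hLL : ∀ x ∈ L, ∀ y ∈ L, g (J x) y = 0)
    (hLS : ∀ x ∈ L, ∀ y ∈ S, g (J x) y = 0)
    (hLS' : ∀ x ∈ L, ∀ y ∈ S', g (J x) y = 0)
    (hpair1 : ∀ n ∈ L, (∀ ξ ∈ Rad, g (J n) ξ = 0) → n = 0)
    (hpair2 : ∀ ξ ∈ Rad, (∀ n ∈ L, g (J n) ξ = 0) → ξ = 0)
    (hJRad : Submodule.map J Rad = L)
    (hJS : Submodule.map J S = S) :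
    (∀ x ∈ S, ∀ y ∈ Rad, g x y = 0) ∧
    (∀ x ∈ S, ∀ y ∈ L, g x y = 0) ∧
    (∀ x ∈ S, ∀ y ∈ S', g x y = 0) ∧
    (∀ x ∈ Rad, ∀ y ∈ L, g x y = 0) ∧
    (∀ x ∈ Rad, ∀ y ∈ S', g x y = 0) ∧
    (∀ x ∈ L, ∀ y ∈ S', g x y = 0) ∧
    perpBilin g W = L ⊔ S' ∧
    W ⊓ perpBilin g W = ⊥ ∧
    Submodule.map J Rad ≤ perpBilin g W := by
  -- symmetry of the associated metric g̃(x,y) = g(Jx,y)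
  have gt_symm : ∀ x y, g (J x) y = g (J y) x := by
    intro x y
    have h := hN (J x) y
    rw [hJ x, map_neg] at h
    simp only [LinearMap.neg_apply, neg_inj] at h
    rw [← h, hsymm]
  have hSW : S ≤ W := hW ▸ le_sup_left
  have hRadW : Rad ≤ W := hW ▸ le_sup_right
  have hRadPerp : ∀ x ∈ Rad, ∀ w ∈ W, g (J x) w = 0 := by
    intro x hx w hw
    have : x ∈ W ⊓ perpBilin (g ∘ₗ J) W := hRad ▸ hx
    exact this.2 w hw
  have hS'Perp : ∀ x ∈ S', ∀ w ∈ W, g (J x) w = 0 := by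
    intro x hx w hw
    exact hS'perp hx w hw
  have hJSmem : ∀ x ∈ S, ∃ x' ∈ S, J x' = x := by
    intro x hx
    have : x ∈ Submodule.map J S := by rw [hJS]; exact hx
    exact Submodule.mem_map.mp this
  have hJRadmem : ∀ x ∈ L, ∃ ξ ∈ Rad, J ξ = x := by
    intro x hx
    have : x ∈ Submodule.map J Rad := by rw [hJRad]; exact hx
    exact Submodule.mem_map.mp this
  -- the six orthogonality relations
  have h1 : ∀ x ∈ S, ∀ y ∈ Rad, g x y = 0 := by
    intro x hx y hy
    obtain ⟨x', hx', rfl⟩ := hJSmem x hx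
    rw [gt_symm]
    exact hRadPerp y hy x' (hSW hx')
  have h2 : ∀ x ∈ S, ∀ y ∈ L, g x y = 0 := by
    intro x hx y hy
    obtain ⟨x', hx', rfl⟩ := hJSmem x hx
    rw [gt_symm]
    exact hLS y hy x' hx'
  have h3 : ∀ x ∈ S, ∀ y ∈ S', g x y = 0 := by
    intro x hx y hy
    obtain ⟨x', hx', rfl⟩ := hJSmem x hx
    rw [gt_symm]
    exact hS'Perp y hy x' (hSW hx')
  have h4 : ∀ x ∈ Rad, ∀ y ∈ L, g x y = 0 := by
    intro x hx y hy
    obtain ⟨ξ, hξ, rfl⟩ := hJRadmem y hy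
    rw [hsymm]
    exact hRadPerp ξ hξ x (hRadW hx)
  have h5 : ∀ x ∈ Rad, ∀ y ∈ S', g x y = 0 := by
    intro x hx y hy
    have hJxL : J x ∈ L := by rw [← hJRad]; exact Submodule.mem_map_of_mem hx
    have h := hLS' (J x) hJxL y hy
    rw [hJ x, map_neg] at h
    simpa using h
  have h6 : ∀ x ∈ L, ∀ y ∈ S', g x y = 0 := by
    intro x hx y hy
    obtain ⟨ξ, hξ, rfl⟩ := hJRadmem x hx
    rw [gt_symm]
    exact hS'Perp y hy ξ (hRadW hξ)
  -- L and S' are g-orthogonal to W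
  have hLperpg : L ≤ perpBilin g W := by
    intro l hl w hw
    rw [hW] at hw
    obtain ⟨s, hs, r, hr, rfl⟩ := Submodule.mem_sup.mp hw
    rw [map_add, hsymm l s]
    rw [h2 s hs l hl, hsymm l r, h4 r hr l hl, add_zero]
  have hS'perpg : S' ≤ perpBilin g W := by
    intro v hv w hw
    rw [hW] at hw
    obtain ⟨s, hs, r, hr, rfl⟩ := Submodule.mem_sup.mp hw
    rw [map_add, hsymm v s, h3 s hs v hv, hsymm v r, h5 r hr v hv, add_zero]
  -- g is nondegenerate on W
  have hWnd : W ⊓ perpBilin g W = ⊥ := by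
    rw [Submodule.eq_bot_iff]
    rintro x ⟨hxW, hxp⟩
    rw [hW] at hxW
    obtain ⟨s, hs, r, hr, rfl⟩ := Submodule.mem_sup.mp hxW
    have hs0 : s = 0 := by
      have hmem : s ∈ S ⊓ perpBilin (g ∘ₗ J) S := by
        refine ⟨hs, ?_⟩
        intro y hy
        show g (J s) y = 0
        rw [gt_symm]
        have hJy : J y ∈ S := by rw [← hJS]; exact Submodule.mem_map_of_mem hy
        have e1 : g (s + r) (J y) = 0 := hxp (J y) (hSW hJy)
        have e2 : g (J y) r = 0 := h1 (J y) hJy r hr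
        have e3 : g (J y) (s + r) = 0 := by rw [hsymm]; exact e1
        rw [map_add] at e3
        rw [e2, add_zero] at e3
        exact e3
      rw [hSnd] at hmem
      exact hmem
    subst hs0
    rw [zero_add] at hxp ⊢
    apply hpair2 r hr
    intro n hn
    obtain ⟨ξ, hξ, rfl⟩ := hJRadmem n hn
    rw [hJ ξ, map_neg]
    have : g r ξ = 0 := hxp ξ (hRadW hξ)
    rw [hsymm] at this
    simp [this]
  -- the g-orthogonal of W is L ⊕ S'
  have hperp : perpBilin g W = L ⊔ S' := by
    apply le_antisymm
    · intro v hv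
      have hv' : v ∈ S ⊔ Rad ⊔ L ⊔ S' := hspan ▸ Submodule.mem_top
      obtain ⟨u, hu, s'', hs'', rfl⟩ := Submodule.mem_sup.mp hv'
      obtain ⟨w, hwm, l, hl, rfl⟩ := Submodule.mem_sup.mp hu
      have hwW : w ∈ W := hW ▸ hwm
      have hw0 : w = 0 := by
        have hwp : w ∈ perpBilin g W := by
          intro u hu'
          have e1 : g (w + l + s'') u = 0 := hv u hu'
          have e2 : g l u = 0 := hLperpg hl u hu'
          have e3 : g s'' u = 0 := hS'perpg hs'' u hu'
          rw [map_add, map_add, LinearMap.add_apply, LinearMap.add_apply, e2, e3,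
            add_zero, add_zero] at e1
          exact e1
        have : w ∈ W ⊓ perpBilin g W := ⟨hwW, hwp⟩
        rw [hWnd] at this
        exact this
      subst hw0
      rw [zero_add]
      exact Submodule.mem_sup.mpr ⟨l, hl, s'', hs'', rfl⟩
    · exact sup_le hLperpg hS'perpg
  exact ⟨h1, h2, h3, h4, h5, h6, hperp, hWnd, by rw [hJRad, hperp]; exact le_sup_left⟩
end

section
/- Let W ⊆ V be a subspace such that the restriction of g to W is nondegenerate and J(W) ⊆ W^{⊥g} (W is totally real with respect to g). Then: W ∩ J(W) = 0; the restriction of g to J(W) is nondegenerate; V = W ⊕ J(W) ⊕ (W + J(W))^{⊥g}, with the three summands mutually g-orthogonal; and the subspace (W + J(W))^{⊥g} is J-invariant. -/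
lemma mem_perpBilin_iff {V : Type*} [AddCommGroup V] [Module ℝ V]
    (h : V →ₗ[ℝ] V →ₗ[ℝ] ℝ) (W : Submodule ℝ V) (v : V) :
    v ∈ perpBilin h W ↔ ∀ w ∈ W, h v w = 0 := Iff.rfl

lemma perpBilin_eq_orthogonal {V : Type*} [AddCommGroup V] [Module ℝ V]
    (g : V →ₗ[ℝ] V →ₗ[ℝ] ℝ) (hsymm : ∀ x y, g x y = g y x) (W : Submodule ℝ V) :
    perpBilin g W = LinearMap.BilinForm.orthogonal g W := by
  ext v
  constructor
  · intro hv n hn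
    exact (hsymm n v).trans (hv n hn)
  · intro hv w hw
    exact (hsymm v w).trans (hv w hw)

/-- Let `W` be a totally real subspace of the Norden vector space
`(V, J, g)`: `g│W` nondegenerate and `J(W) ⊆ W^{⊥g}`.  Then `W ∩ J(W) = 0`, the
restriction of `g` to `J(W)` is nondegenerate,
`V = W ⊕ J(W) ⊕ (W + J(W))^{⊥g}` with mutually `g`-orthogonal summands, and
`(W + J(W))^{⊥g}` is `J`-invariant. -/
theorem totally_real_decomposition
    (V : Type*) [AddCommGroup V] [Module ℝ V] [FiniteDimensional ℝ V]
    (J : V →ₗ[ℝ] V) (hJ : ∀ x, J (J x) = -x)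
    (g : V →ₗ[ℝ] V →ₗ[ℝ] ℝ)
    (hsymm : ∀ x y, g x y = g y x)
    (hnd : ∀ x, (∀ y, g x y = 0) → x = 0)
    (hN : ∀ x y, g (J x) (J y) = -g x y)
    (W : Submodule ℝ V)
    (hWnd : W ⊓ perpBilin g W = ⊥)
    (hTR : Submodule.map J W ≤ perpBilin g W) :
    W ⊓ Submodule.map J W = ⊥ ∧
    Submodule.map J W ⊓ perpBilin g (Submodule.map J W) = ⊥ ∧
    (W ⊔ Submodule.map J W) ⊓ perpBilin g (W ⊔ Submodule.map J W) = ⊥ ∧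
    W ⊔ Submodule.map J W ⊔ perpBilin g (W ⊔ Submodule.map J W) = ⊤ ∧
    (∀ x ∈ W, ∀ y ∈ Submodule.map J W, g x y = 0) ∧
    (∀ x ∈ W, ∀ y ∈ perpBilin g (W ⊔ Submodule.map J W), g x y = 0) ∧
    (∀ x ∈ Submodule.map J W, ∀ y ∈ perpBilin g (W ⊔ Submodule.map J W),
      g x y = 0) ∧
    Submodule.map J (perpBilin g (W ⊔ Submodule.map J W))
      = perpBilin g (W ⊔ Submodule.map J W) := by
  set U := W ⊔ Submodule.map J W with hU
  have hrefl : (g : LinearMap.BilinForm ℝ V).IsRefl := by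
    intro x y hxy
    rw [hsymm]; exact hxy
  -- W ∩ JW = 0
  have h1 : W ⊓ Submodule.map J W = ⊥ := by
    rw [eq_bot_iff]
    intro x hx
    have : x ∈ W ⊓ perpBilin g W := ⟨hx.1, hTR hx.2⟩
    rw [hWnd] at this
    exact this
  -- JW ∩ (JW)^⊥ = 0
  have h2 : Submodule.map J W ⊓ perpBilin g (Submodule.map J W) = ⊥ := by
    rw [eq_bot_iff]
    intro x hx
    obtain ⟨⟨w, hw, rfl⟩, hx2⟩ := hx
    have hw0 : w ∈ W ⊓ perpBilin g W := by
      refine ⟨hw, fun w' hw' => ?_⟩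
      have := hN w w'
      have h2' : g (J w) (J w') = 0 := hx2 _ ⟨w', hw', rfl⟩
      linarith
    rw [hWnd] at hw0
    have : w = 0 := (Submodule.mem_bot ℝ).mp hw0
    simp [this]
  -- U ∩ U^⊥ = 0
  have h3 : U ⊓ perpBilin g U = ⊥ := by
    rw [eq_bot_iff]
    intro x hx
    obtain ⟨hx1, hx2⟩ := hx
    obtain ⟨a, ha, b, hb, rfl⟩ := Submodule.mem_sup.mp hx1
    have ha0 : a ∈ W ⊓ perpBilin g W := by
      refine ⟨ha, fun w' hw' => ?_⟩
      have e1 : g (a + b) w' = 0 := hx2 w' (Submodule.mem_sup_left hw')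
      have e2 : g b w' = 0 := hTR hb w' hw'
      have := g.map_add a b
      simp only [map_add, LinearMap.add_apply] at e1
      linarith
    rw [hWnd] at ha0
    have ha0' : a = 0 := (Submodule.mem_bot ℝ).mp ha0
    subst ha0'
    have hb0 : b ∈ Submodule.map J W ⊓ perpBilin g (Submodule.map J W) := by
      refine ⟨hb, fun y hy => ?_⟩
      have := hx2 y (Submodule.mem_sup_right hy)
      simpa using this
    rw [h2] at hb0
    simpa using (Submodule.mem_bot ℝ).mp hb0
  -- spanning
  have h4 : U ⊔ perpBilin g U = ⊤ := by
    rw [perpBilin_eq_orthogonal g hsymm]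
    have hdisj : Disjoint U (LinearMap.BilinForm.orthogonal g U) := by
      rw [disjoint_iff, ← perpBilin_eq_orthogonal g hsymm]
      exact h3
    have := (LinearMap.BilinForm.isCompl_orthogonal_iff_disjoint hrefl).mpr hdisj
    exact this.sup_eq_top
  -- orthogonality of W and JW
  have h5 : ∀ x ∈ W, ∀ y ∈ Submodule.map J W, g x y = 0 := by
    intro x hx y hy
    rw [hsymm]
    exact hTR hy x hx
  have h6 : ∀ x ∈ W, ∀ y ∈ perpBilin g U, g x y = 0 := by
    intro x hx y hy
    rw [hsymm]
    exact hy x (Submodule.mem_sup_left hx)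
  have h7 : ∀ x ∈ Submodule.map J W, ∀ y ∈ perpBilin g U, g x y = 0 := by
    intro x hx y hy
    rw [hsymm]
    exact hy x (Submodule.mem_sup_right hx)
  -- J-invariance
  have key : ∀ v ∈ perpBilin g U, J v ∈ perpBilin g U := by
    intro v hv u hu
    obtain ⟨a, ha, b, hb, rfl⟩ := Submodule.mem_sup.mp hu
    obtain ⟨b', hb', rfl⟩ := hb
    have e1 : g (J v) (J b') = -g v b' := hN v b'
    have e2 : g v b' = 0 := hv b' (Submodule.mem_sup_left hb')
    have e3 : g (J v) (J (J a)) = -g v (J a) := hN v (J a)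
    have e4 : g v (J a) = 0 := hv (J a) (Submodule.mem_sup_right ⟨a, ha, rfl⟩)
    have e5 : g (J v) a = 0 := by
      have : g (J v) (J (J a)) = g (J v) (-a) := by rw [hJ a]
      simp only [map_neg] at this
      rw [e3, e4] at this
      linarith
    have : g (J v) (a + J b') = g (J v) a + g (J v) (J b') := by simp
    rw [this, e5, e1, e2]
    ring
  have h8 : Submodule.map J (perpBilin g U) = perpBilin g U := by
    apply le_antisymm
    · rintro _ ⟨v, hv, rfl⟩
      exact key v hv
    · intro x hx
      refine ⟨-(J x), Submodule.neg_mem _ (key x hx), ?_⟩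
      rw [map_neg, hJ x, neg_neg]
  exact ⟨h1, h2, h3, h4, h5, h6, h7, h8⟩
end
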